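/- Let ν ≥ 1 be an integer, let n_1 ≥ ⋯ ≥ n_r ≥ 1 and m_1 ≥ ⋯ ≥ m_s ≥ 1 be two nonincreasing finite sequences of positive integers, with conjugate sequences n^{(t)} = #{ p ∈ {1,…,r} : n_p ≥ t } and m^{(t)} = #{ q ∈ {1,…,s} : m_q ≥ t } for integers t ≥ 1. Then ∑_{p=1}^{r} ∑_{q=1}^{s} min(n_p, ν·m_q) = ∑_{t≥1} m^{(t)} · ( n^{(νt−ν+1)} + n^{(νt−ν+2)} + ⋯ + n^{(νt)} ), where the right-hand sum has only finitely many nonzero terms. (For ν = 2 this is the equality ∑_{p,q} min{n_p, 2 m_q} = ∑_{t≥1} m^{(t)} ( n^{(2t−1)} + n^{(2t)} ) used in the character computation for type F_4.) -/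
import Mathlib


/-- Let `ν ≥ 1`. For two nonincreasing sequences `n 1 ≥ … ≥ n r ≥ 1` and
`m 1 ≥ … ≥ m s ≥ 1` of positive integers, with conjugate sequences
`nconj t = #{p ∈ {1,…,r} : n p ≥ t}` and `mconj t = #{q ∈ {1,…,s} : m q ≥ t}`, we have
`∑_{p=1}^r ∑_{q=1}^s min(n_p, ν·m_q)
  = ∑_{t ≥ 1} mconj t · (nconj (νt−ν+1) + nconj (νt−ν+2) + ⋯ + nconj (νt))`
(a finitely supported sum; the inner range `ν(t+1)−ν+1, …, ν(t+1)` for the 0-indexed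
summation variable `t` is `Finset.Icc (ν*t+1) (ν*t+ν)`). -/
theorem stmt_2 (ν : ℕ) (hν : 1 ≤ ν) (r s : ℕ) (n m : ℕ → ℕ)
    (hn_anti : ∀ p q, 1 ≤ p → p ≤ q → q ≤ r → n q ≤ n p)
    (hn_pos : ∀ p, 1 ≤ p → p ≤ r → 1 ≤ n p)
    (hm_anti : ∀ p q, 1 ≤ p → p ≤ q → q ≤ s → m q ≤ m p)
    (hm_pos : ∀ q, 1 ≤ q → q ≤ s → 1 ≤ m q)
    (nconj mconj : ℕ → ℕ)
    (hnconj : ∀ t, 1 ≤ t → nconj t = ((Finset.Icc 1 r).filter fun p => t ≤ n p).card)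
    (hmconj : ∀ t, 1 ≤ t → mconj t = ((Finset.Icc 1 s).filter fun q => t ≤ m q).card) :
    ∑ p ∈ Finset.Icc 1 r, ∑ q ∈ Finset.Icc 1 s, min (n p) (ν * m q)
      = ∑ᶠ t : ℕ, mconj (t + 1) * ∑ j ∈ Finset.Icc (ν * t + 1) (ν * t + ν), nconj j := by
  classical
  set M := (Finset.Icc 1 s).sup m with hM
  -- the finsum has support inside `range M`
  have hsupp : (Function.support fun t =>
      mconj (t + 1) * ∑ j ∈ Finset.Icc (ν * t + 1) (ν * t + ν), nconj j)
      ⊆ ↑(Finset.range M) := by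
    intro t ht
    simp only [Function.mem_support] at ht
    have h1 : mconj (t + 1) ≠ 0 := fun h => ht (by simp [h])
    rw [hmconj (t + 1) (Nat.le_add_left 1 t)] at h1
    obtain ⟨q, hq⟩ := Finset.card_ne_zero.mp h1
    simp only [Finset.mem_filter, Finset.mem_Icc] at hq
    have : t + 1 ≤ M := le_trans hq.2 (Finset.le_sup (Finset.mem_Icc.2 hq.1))
    simp only [Finset.coe_range, Set.mem_Iio]
    omega
  rw [finsum_eq_sum_of_support_subset _ hsupp]
  -- Lemma A : ∑_p min (n p) c = ∑_{j=1}^c nconj j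
  have lemA : ∀ c : ℕ, ∑ p ∈ Finset.Icc 1 r, min (n p) c = ∑ j ∈ Finset.Icc 1 c, nconj j := by
    intro c
    have h1 : ∑ j ∈ Finset.Icc 1 c, nconj j
        = ∑ j ∈ Finset.Icc 1 c, ∑ p ∈ Finset.Icc 1 r, (if j ≤ n p then 1 else 0) := by
      refine Finset.sum_congr rfl fun j hj => ?_
      rw [hnconj j (Finset.mem_Icc.1 hj).1, Finset.card_filter]
    rw [h1, Finset.sum_comm]
    refine Finset.sum_congr rfl fun p hp => ?_
    rw [← Finset.card_filter]
    have h2 : (Finset.Icc 1 c).filter (fun j => j ≤ n p) = Finset.Icc 1 (min (n p) c) := by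
      ext j
      simp only [Finset.mem_filter, Finset.mem_Icc]
      omega
    rw [h2, Nat.card_Icc]
    omega
  -- Lemma B : grouping the intervals
  have lemB : ∀ c : ℕ, ∑ t ∈ Finset.range c, ∑ j ∈ Finset.Icc (ν * t + 1) (ν * t + ν), nconj j
      = ∑ j ∈ Finset.Icc 1 (ν * c), nconj j := by
    intro c
    induction c with
    | zero => simp
    | succ c ih =>
      rw [Finset.sum_range_succ, ih]
      have e1 : ∀ a b : ℕ, Finset.Icc (a + 1) b = Finset.Ioc a b := fun a b => by
        ext j; simp only [Finset.mem_Icc, Finset.mem_Ioc]; omega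
      rw [show (1 : ℕ) = 0 + 1 by rfl, e1, e1, e1,
        Finset.sum_Ioc_consecutive _ (Nat.zero_le _)
          (by omega : ν * c ≤ ν * c + ν)]
      have : ν * (c + (0 + 1)) = ν * c + ν := by ring
      rw [this]
  -- rewrite both sides as double sums over q
  have hrhs : ∑ t ∈ Finset.range M,
      mconj (t + 1) * ∑ j ∈ Finset.Icc (ν * t + 1) (ν * t + ν), nconj j
      = ∑ q ∈ Finset.Icc 1 s, ∑ j ∈ Finset.Icc 1 (ν * m q), nconj j := by
    have h1 : ∀ t ∈ Finset.range M,
        mconj (t + 1) * ∑ j ∈ Finset.Icc (ν * t + 1) (ν * t + ν), nconj j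
        = ∑ q ∈ Finset.Icc 1 s, (if t + 1 ≤ m q then
            ∑ j ∈ Finset.Icc (ν * t + 1) (ν * t + ν), nconj j else 0) := by
      intro t _
      rw [hmconj (t + 1) (Nat.le_add_left 1 t), Finset.card_filter, Finset.sum_mul]
      refine Finset.sum_congr rfl fun q _ => ?_
      split <;> simp
    rw [Finset.sum_congr rfl h1, Finset.sum_comm]
    refine Finset.sum_congr rfl fun q hq => ?_
    rw [← lemB (m q), ← Finset.sum_filter]
    have hmq : m q ≤ M := Finset.le_sup hq
    refine Finset.sum_congr ?_ fun _ _ => rfl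
    ext t
    simp only [Finset.mem_filter, Finset.mem_range]
    omega
  rw [hrhs, Finset.sum_comm]
  exact Finset.sum_congr rfl fun q _ => lemA (ν * m q)
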